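/- Let C be a □(κ) sequence and B a κ-c.c. forcing notion. Then C remains a □(κ) sequence after forcing with B; in particular B adds no thread to C. -/

import Mathlib

/-- `β` is an accumulation point of `C`. -/
def accPts (C : Set Ordinal) : Set Ordinal :=
  {β | 0 < β ∧ ∀ x < β, ∃ y ∈ C, x < y ∧ y < β}

/-- `C` is a closed unbounded subset of the ordinal `σ`. -/
def IsClubIn (C : Set Ordinal) (σ : Ordinal) : Prop :=
  C ⊆ Set.Iio σ ∧ (∀ α < σ, ∃ β ∈ C, α ≤ β) ∧ ∀ α < σ, α ∈ accPts C → α ∈ C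

/-- `S` is stationary in the ordinal `σ`. -/
def IsStatIn (S : Set Ordinal) (σ : Ordinal) : Prop :=
  ∀ C, IsClubIn C σ → (S ∩ C).Nonempty

/-- An abstract forcing notion: a preorder with a maximal element. -/
structure ForcingNotion where
  P : Type
  le : P → P → Prop
  top : P
  le_refl : ∀ p, le p p
  le_trans : ∀ p q r, le p q → le q r → le p r
  le_top : ∀ p, le p top

/-- Given a name for a set of ordinals presented by its membership relation `N`
("`N r α` iff `r ⊩ α̌ ∈ Ṅ`"), `p` forces `α ∈ Ṅ` iff densely many extensions of `p`
witness it. -/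
def ForcingNotion.forcesMem (F : ForcingNotion) (N : F.P → Ordinal → Prop)
    (p : F.P) (α : Ordinal) : Prop :=
  ∀ q, F.le q p → ∃ r, F.le r q ∧ N r α

/-- `p` forces `α ∉ Ṅ`: no extension of `p` puts `α` into the name. -/
def ForcingNotion.forcesNotMem (F : ForcingNotion) (N : F.P → Ordinal → Prop)
    (p : F.P) (α : Ordinal) : Prop :=
  ∀ q, F.le q p → ¬ N q α

/-- A name for a club subset of `σ`, presented by its membership forcing relation:
monotone, concentrated below `σ`, forced unbounded, and closed. -/
structure ClubName (F : ForcingNotion) (σ : Ordinal) where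
  N : F.P → Ordinal → Prop
  mono : ∀ p q α, F.le q p → N p α → N q α
  lt : ∀ p α, N p α → α < σ
  unbdd : ∀ p : F.P, ∀ β, β < σ → ∃ q, F.le q p ∧ ∃ α, β ≤ α ∧ N q α
  closed : ∀ p α, 0 < α → α < σ → (∀ x, x < α → ∃ y, x < y ∧ y < α ∧ N p y) → N p α

/-- `q` forces that the ground-model set `S` remains stationary in `σ`: every name for a
club of `σ` is forced, densely below `q`, to meet `S`. -/
def ForcesStat (F : ForcingNotion) (q : F.P) (S : Set Ordinal) (σ : Ordinal) : Prop :=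
  ∀ D : ClubName F σ, ∀ p, F.le p q → ∃ r, F.le r p ∧ ∃ α ∈ S, D.N r α

/-- `F` generically preserves stationary subsets of `σ`: for every stationary `S` some
condition forces `S` to remain stationary. -/
def GenPres (F : ForcingNotion) (σ : Ordinal) : Prop :=
  ∀ S : Set Ordinal, S ⊆ Set.Iio σ → IsStatIn S σ → ∃ q, ForcesStat F q S σ

/-- `F` is `κ`-c.c.: every antichain has size `< κ`. -/
def KCC (F : ForcingNotion) (κ : Cardinal) : Prop :=
  ∀ A : Set F.P, (∀ p ∈ A, ∀ q ∈ A, p ≠ q → ∀ r, ¬ (F.le r p ∧ F.le r q)) →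
    Cardinal.mk ↥A < κ

/-- A coherent sequence on `σ`. -/
def IsCoherentSeq (σ : Ordinal) (Cs : Ordinal → Set Ordinal) : Prop :=
  (∀ α, α < σ → 0 < α → IsClubIn (Cs α) α) ∧
  (∀ α, α < σ → ∀ β ∈ accPts (Cs α), Cs α ∩ Set.Iio β = Cs β)

/-- `D` is a thread through the coherent sequence `Cs`. -/
def IsThread (σ : Ordinal) (Cs : Ordinal → Set Ordinal) (D : Set Ordinal) : Prop :=
  IsClubIn D σ ∧ ∀ α ∈ accPts D, α < σ → D ∩ Set.Iio α = Cs α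

/-- `Cs` is a `□(σ)` sequence: coherent with no thread. -/
def IsSquareSeq (σ : Ordinal) (Cs : Ordinal → Set Ordinal) : Prop :=
  IsCoherentSeq σ Cs ∧ ¬ ∃ D : Set Ordinal, IsThread σ Cs D

/-- Every dense set contains a "predense" antichain: a maximal antichain inside it. -/
lemma exists_dense_antichain (F : ForcingNotion) (S : Set F.P)
    (hS : ∀ q, ∃ r, F.le r q ∧ r ∈ S) :
    ∃ A, A ⊆ S ∧
      (∀ p ∈ A, ∀ q ∈ A, p ≠ q → ∀ r, ¬ (F.le r p ∧ F.le r q)) ∧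
      ∀ q, ∃ a ∈ A, ∃ s, F.le s q ∧ F.le s a := by
  set 𝒜 : Set (Set F.P) :=
    {A | A ⊆ S ∧ ∀ p ∈ A, ∀ q ∈ A, p ≠ q → ∀ r, ¬ (F.le r p ∧ F.le r q)} with h𝒜
  have hchainub : ∀ c ⊆ 𝒜, IsChain (· ⊆ ·) c → ∃ ub ∈ 𝒜, ∀ s ∈ c, s ⊆ ub := by
    intro c hc hchain
    refine ⟨⋃₀ c, ⟨Set.sUnion_subset fun t ht => (hc ht).1, ?_⟩,
      fun s hs => Set.subset_sUnion_of_mem hs⟩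
    rintro p ⟨t, ht, hp⟩ q ⟨u, hu, hq⟩ hne r
    rcases hchain.total ht hu with h | h
    · exact (hc hu).2 p (h hp) q hq hne r
    · exact (hc ht).2 p hp q (h hq) hne r
  obtain ⟨A, hA⟩ := zorn_subset 𝒜 hchainub
  refine ⟨A, hA.prop.1, hA.prop.2, ?_⟩
  intro q
  obtain ⟨r, hrq, hrS⟩ := hS q
  by_cases hmem : ∃ a ∈ A, ∃ s, F.le s r ∧ F.le s a
  · obtain ⟨a, ha, s, h1, h2⟩ := hmem
    exact ⟨a, ha, s, F.le_trans s r q h1 hrq, h2⟩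
  · exfalso
    have hrA : r ∉ A := fun h => hmem ⟨r, h, r, F.le_refl r, F.le_refl r⟩
    have hins : insert r A ∈ 𝒜 := by
      refine ⟨Set.insert_subset hrS hA.prop.1, ?_⟩
      rintro p hp q hq hne s ⟨hs1, hs2⟩
      rcases hp with rfl | hp
      · rcases hq with rfl | hq
        · exact hne rfl
        · exact hmem ⟨q, hq, s, hs1, hs2⟩
      · rcases hq with rfl | hq
        · exact hmem ⟨p, hp, s, hs2, hs1⟩
        · exact hA.prop.2 p hp q hq hne s ⟨hs1, hs2⟩
    have := hA.2 hins (Set.subset_insert r A)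
    exact hrA (this (Set.mem_insert r A))

/-- Let `Cs` be a `□(κ)` sequence and `F` a `κ`-c.c. forcing.  Then `Cs` remains a `□(κ)`
sequence after forcing with `F`: it stays coherent, and there can be no `F`-name `Ṅ`
(presented by its membership relation, monotone, forced to be a club of `κ` coherent with
`Cs` at its accumulation points) for a thread through `Cs`. -/
theorem stmt8 (κ : Cardinal) (hκ : κ.IsRegular) (hκω : Cardinal.aleph0 < κ)
    (Cs : Ordinal → Set Ordinal) (hsq : IsSquareSeq κ.ord Cs)
    (F : ForcingNotion) (hcc : KCC F κ) :
    IsCoherentSeq κ.ord Cs ∧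
    ¬ ∃ N : F.P → Ordinal → Prop,
        (∀ p q α, F.le q p → N p α → N q α) ∧
        (∀ p α, N p α → α < κ.ord) ∧
        -- forced unbounded in κ
        (∀ p : F.P, ∀ β, β < κ.ord → ∃ q, F.le q p ∧ ∃ α, β ≤ α ∧ N q α) ∧
        -- forced closed
        (∀ p α, 0 < α → α < κ.ord →
          (∀ x, x < α → ∃ y, x < y ∧ y < α ∧ N p y) → N p α) ∧
        -- forced to cohere with `Cs`: if `p ⊩ α ∈ acc Ṅ` then `p ⊩ Ṅ ∩ α = C_α`
        (∀ p α, α < κ.ord →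
          (∀ x, x < α → ∀ q, F.le q p → ∃ r, F.le r q ∧ ∃ y, x < y ∧ y < α ∧ N r y) →
          ∀ β, β < α →
            (β ∈ Cs α → F.forcesMem N p β) ∧ (β ∉ Cs α → F.forcesNotMem N p β)) := by
  obtain ⟨hcohseq, hnothread⟩ := hsq
  refine ⟨hcohseq, ?_⟩
  rintro ⟨N, hmono, hlt, hunbdd, hclosed, hcoh⟩
  have hκ0 : Cardinal.aleph0 ≤ κ := hκ.aleph0_le
  have hlim : Order.IsSuccLimit κ.ord := Cardinal.isSuccLimit_ord hκ0
  -- Step: bounded density of N above any γ, uniformly in the condition.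
  have step : ∀ γ, γ < κ.ord → ∃ δ, γ < δ ∧ δ < κ.ord ∧
      ∀ q, ∃ r, F.le r q ∧ ∃ y, γ ≤ y ∧ y < δ ∧ N r y := by
    intro γ hγ
    have hdense : ∀ q, ∃ r, F.le r q ∧ r ∈ {r | ∃ y, γ ≤ y ∧ N r y} := by
      intro q
      obtain ⟨r, h1, y, h2, h3⟩ := hunbdd q γ hγ
      exact ⟨r, h1, y, h2, h3⟩
    obtain ⟨A, hAS, hAanti, hAmax⟩ := exists_dense_antichain F _ hdense
    have hAcard : Cardinal.mk ↥A < κ := hcc A hAanti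
    choose y hy1 hy2 using fun a : ↥A => hAS a.2
    refine ⟨max (Order.succ γ) (⨆ a : ↥A, Order.succ (y a)), ?_, ?_, ?_⟩
    · exact lt_of_lt_of_le (Order.lt_succ γ) (le_max_left _ _)
    · refine max_lt (hlim.succ_lt hγ) ?_
      refine Cardinal.iSup_lt_ord_of_isRegular hκ hAcard ?_
      intro a
      exact hlim.succ_lt (hlt _ _ (hy2 a))
    · intro q
      obtain ⟨a, haA, s, hsq, hsa⟩ := hAmax q
      refine ⟨s, hsq, y ⟨a, haA⟩, hy1 _, ?_, hmono a s _ hsa (hy2 ⟨a, haA⟩)⟩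
      calc y ⟨a, haA⟩ < Order.succ (y ⟨a, haA⟩) := Order.lt_succ _
        _ ≤ ⨆ a : ↥A, Order.succ (y a) := Ordinal.le_iSup _ _
        _ ≤ _ := le_max_right _ _
  choose! f hf1 hf2 hf3 using step
  -- Key: above any β there is α which every condition forces into acc(Ṅ).
  have key : ∀ β, β < κ.ord → ∃ α, β < α ∧ α < κ.ord ∧
      (∀ x, x < α → ∀ q : F.P, ∃ r, F.le r q ∧ ∃ y, x < y ∧ y < α ∧ N r y) := by
    intro β hβ
    set g : ℕ → Ordinal := fun n => f^[n] (Order.succ β) with hg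
    have hgs : ∀ n, g (n + 1) = f (g n) := fun n => Function.iterate_succ_apply' f n _
    have hgκ : ∀ n, g n < κ.ord := by
      intro n
      induction n with
      | zero => exact hlim.succ_lt hβ
      | succ n ih => rw [hgs]; exact hf2 _ ih
    have hgα : ∀ n, g n ≤ ⨆ n, g n := Ordinal.le_iSup g
    have hακ : (⨆ n, g n) < κ.ord := by
      refine Cardinal.iSup_lt_ord_of_isRegular hκ ?_ hgκ
      simpa using hκω
    refine ⟨⨆ n, g n, lt_of_lt_of_le (Order.lt_succ β) (hgα 0), hακ, ?_⟩
    intro x hx q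
    obtain ⟨n, hn⟩ := Ordinal.lt_iSup_iff.mp hx
    obtain ⟨r, hrq, yy, h1, h2, h3⟩ := hf3 (g n) (hgκ n) q
    refine ⟨r, hrq, yy, hn.trans_le h1, ?_, h3⟩
    refine lt_of_lt_of_le ?_ (hgα (n + 1))
    rw [hgs n]; exact h2
  -- The candidate thread.
  set D : Set Ordinal := {β | ∃ q, N q β} with hD
  have hE : ∀ β, β < κ.ord → ∃ α, β < α ∧ α < κ.ord ∧ 0 < α ∧ D ∩ Set.Iio α = Cs α := by
    intro β hβ
    obtain ⟨α, h1, h2, h3⟩ := key β hβ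
    have h0α : 0 < α := lt_of_le_of_lt (zero_le (a := β)) h1
    have hcohα := hcoh F.top α h2 (fun x hx q _ => h3 x hx q)
    have hclub := hcohseq.1 α h2 h0α
    refine ⟨α, h1, h2, h0α, ?_⟩
    ext ξ
    constructor
    · rintro ⟨⟨q, hq⟩, hξ⟩
      by_contra hn
      exact (hcohα ξ hξ).2 hn q (F.le_top q) hq
    · intro hξ
      have hξα : ξ < α := hclub.1 hξ
      obtain ⟨r, _, hr⟩ := (hcohα ξ hξα).1 hξ F.top (F.le_refl _)
      exact ⟨⟨r, hr⟩, hξα⟩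
  -- transferring accumulation points
  have hacc : ∀ ξ α, ξ ∈ accPts D → ξ < α → D ∩ Set.Iio α = Cs α → ξ ∈ accPts (Cs α) := by
    intro ξ α hξ hξα hDα
    refine ⟨hξ.1, fun x hx => ?_⟩
    obtain ⟨yy, hyD, h1, h2⟩ := hξ.2 x hx
    have : yy ∈ Cs α := by rw [← hDα]; exact ⟨hyD, h2.trans hξα⟩
    exact ⟨yy, this, h1, h2⟩
  refine hnothread ⟨D, ⟨?_, ?_, ?_⟩, ?_⟩
  · rintro β ⟨q, hq⟩
    exact hlt q β hq
  · intro β hβ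
    obtain ⟨α, h1, h2, h0, hDα⟩ := hE β hβ
    obtain ⟨γ, hγ, hβγ⟩ := (hcohseq.1 α h2 h0).2.1 β h1
    rw [← hDα] at hγ
    exact ⟨γ, hγ.1, hβγ⟩
  · intro ξ hξκ hξacc
    obtain ⟨α, h1, h2, h0, hDα⟩ := hE ξ hξκ
    have hξα := hacc ξ α hξacc h1 hDα
    have : ξ ∈ Cs α := (hcohseq.1 α h2 h0).2.2 ξ h1 hξα
    rw [← hDα] at this
    exact this.1
  · intro ξ hξacc hξκ
    obtain ⟨α, h1, h2, h0, hDα⟩ := hE ξ hξκ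
    have hξα := hacc ξ α hξacc h1 hDα
    have hCs := hcohseq.2 α h2 ξ hξα
    rw [← hCs, ← hDα]
    ext ζ
    simp only [Set.mem_inter_iff, Set.mem_Iio]
    constructor
    · rintro ⟨hζD, hζ⟩
      exact ⟨⟨hζD, hζ.trans h1⟩, hζ⟩
    · rintro ⟨⟨hζD, _⟩, hζ⟩
      exact ⟨hζD, hζ⟩
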